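/- arXiv:1407.5750 — 3 statements merged into one kernel-verified Lean document; each statement's English description precedes it below -/
import Mathlib

section
/- Let n : ℕ → ℕ be a sequence with n(0) ≥ 1, n(1) ≥ 2, and n(k) ≥ n(k−2) + n(k−3) + ⋯ + n(0) + 2 for every k ≥ 2. Then for every natural number k, n(k) ≥ φ^k, where φ = (1 + √5)/2 is the golden ratio. -/
/-- If `n 0 ≥ 1`, `n 1 ≥ 2`, and `n k ≥ n (k-2) + n (k-3) + ⋯ + n 0 + 2`
for every `k ≥ 2`, then `n k ≥ φ^k` for every `k`, where `φ = (1 + √5)/2`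
is the golden ratio. -/
theorem ge_goldenRatio_pow_of_ge_sum (n : ℕ → ℕ)
    (h0 : n 0 ≥ 1) (h1 : n 1 ≥ 2)
    (hsum : ∀ k, 2 ≤ k → n k ≥ 2 + ∑ j ∈ Finset.range (k - 1), n j) :
    ∀ k, (n k : ℝ) ≥ ((1 + Real.sqrt 5) / 2) ^ k := by
  set φ : ℝ := (1 + Real.sqrt 5) / 2 with hφ
  have h5 : Real.sqrt 5 ^ 2 = 5 := Real.sq_sqrt (by norm_num)
  have h5nn : (0:ℝ) ≤ Real.sqrt 5 := Real.sqrt_nonneg 5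
  have hφ2 : φ ^ 2 = φ + 1 := by rw [hφ]; nlinarith [h5]
  have hφle2 : φ ≤ 2 := by rw [hφ]; nlinarith [h5, h5nn]
  have hφpos : (0:ℝ) < φ := by rw [hφ]; positivity
  intro k
  induction k using Nat.strong_induction_on with
  | _ k ih =>
    match k with
    | 0 => simpa using (by exact_mod_cast h0 : (1:ℝ) ≤ (n 0 : ℝ))
    | 1 =>
      have : (2:ℝ) ≤ (n 1 : ℝ) := by exact_mod_cast h1
      simpa using le_trans hφle2 this
    | (k+2) =>
      have hs := hsum (k+2) (by omega)
      have hs' : (2:ℝ) + ∑ j ∈ Finset.range (k+1), (n j : ℝ) ≤ (n (k+2) : ℝ) := by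
        have : ((2 + ∑ j ∈ Finset.range (k+2-1), n j : ℕ) : ℝ) ≤ (n (k+2) : ℝ) := by
          exact_mod_cast hs
        simpa [Nat.cast_sum] using this
      have hb : ∑ j ∈ Finset.range (k+1), φ ^ j
          ≤ ∑ j ∈ Finset.range (k+1), (n j : ℝ) :=
        Finset.sum_le_sum fun j hj => ih j (by
          have := Finset.mem_range.mp hj; omega)
      have hgeom : (∑ j ∈ Finset.range (k+1), φ ^ j) * (φ - 1) = φ ^ (k+1) - 1 :=
        geom_sum_mul φ (k+1)
      have hφ1 : φ * (φ - 1) = 1 := by nlinarith [hφ2]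
      have hsumval : ∑ j ∈ Finset.range (k+1), φ ^ j = φ ^ (k+2) - φ := by
        calc ∑ j ∈ Finset.range (k+1), φ ^ j
            = (∑ j ∈ Finset.range (k+1), φ ^ j) * (φ * (φ - 1)) := by rw [hφ1]; ring
          _ = ((∑ j ∈ Finset.range (k+1), φ ^ j) * (φ - 1)) * φ := by ring
          _ = (φ ^ (k+1) - 1) * φ := by rw [hgeom]
          _ = φ ^ (k+2) - φ := by ring
      have : φ ^ (k+2) ≤ (n (k+2) : ℝ) := by
        calc φ ^ (k+2) ≤ 2 + (φ ^ (k+2) - φ) := by linarith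
          _ = 2 + ∑ j ∈ Finset.range (k+1), φ ^ j := by rw [hsumval]
          _ ≤ 2 + ∑ j ∈ Finset.range (k+1), (n j : ℝ) := by linarith
          _ ≤ (n (k+2) : ℝ) := hs'
      exact this
end

section
/- Let T be a finite rooted tree equipped with a rank labeling r assigning a natural number to each node, and suppose that for every node v of T there exist r(v) pairwise distinct children c_1, …, c_{r(v)} of v such that for each i with 1 ≤ i ≤ r(v) and r(v) − i − 1 ≥ 0, r(c_i) ≥ r(v) − i − 1. Then the number of nodes of T is at least F_{r(root) + 2}, where F denotes the Fibonacci numbers and root is the root of T. -/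
/-- A finitely-branching rose tree whose nodes are labeled by natural-number
ranks: a tree is a root node (with its rank) together with a finite list of
subtrees. -/
inductive RankTree : Type where
  | node : ℕ → List RankTree → RankTree

namespace RankTree

/-- The rank of the root node of a tree. -/
def rank : RankTree → ℕ
  | node r _ => r

/-- The list of subtrees rooted at the children of the root. -/
def children : RankTree → List RankTree
  | node _ cs => cs

/-- The number of nodes of a tree. -/
def size : RankTree → ℕ
  | node _ cs => 1 + (cs.attach.map (fun c => size c.1)).sum
decreasing_by
  have := List.sizeOf_lt_of_mem c.2
  cases c
  simp only [RankTree.node.sizeOf_spec] at *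
  omega

/-- `IsNode v T` holds iff `v` is (the subtree rooted at) a node of `T`. -/
inductive IsNode : RankTree → RankTree → Prop
  | refl (T : RankTree) : IsNode T T
  | child {v c T : RankTree} : c ∈ T.children → IsNode v c → IsNode v T

/-- A tree satisfies the rank invariant if every node `v` has `rank v`
pairwise distinct children `c_1, …, c_{rank v}` (given by an injection from
`Fin (rank v)` into the positions of the children of `v`) such that
`rank (c_i) ≥ rank v − i − 1` for `1 ≤ i ≤ rank v` (with truncated
subtraction, so the requirement is vacuous when `rank v − i − 1 < 0`). -/
def RankInvariant (T : RankTree) : Prop :=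
  ∀ v : RankTree, IsNode v T →
    ∃ f : Fin v.rank → Fin v.children.length, Function.Injective f ∧
      ∀ i : Fin v.rank, (v.children.get (f i)).rank ≥ v.rank - (i.val + 1) - 1

end RankTree

lemma RankTree.rank_node (r : ℕ) (cs : List RankTree) :
    (RankTree.node r cs).rank = r := rfl

lemma RankTree.children_node (r : ℕ) (cs : List RankTree) :
    (RankTree.node r cs).children = cs := rfl

lemma fib_sum_aux (r : ℕ) :
    (∑ i : Fin r, Nat.fib (r - i.val - 2 + 2)) + 1 = Nat.fib (r + 2) := by
  induction r with
  | zero => simp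
  | succ r ih =>
    rw [Fin.sum_univ_succ]
    have h1 : ∀ i : Fin r, r + 1 - ((i.succ : Fin (r+1)).val) - 2 + 2
        = r - i.val - 2 + 2 := by
      intro i; simp only [Fin.val_succ]; omega
    simp only [h1]
    have h0 : ((0 : Fin (r+1)).val) = 0 := rfl
    rw [h0]
    have h2 : Nat.fib (r + 1 - 0 - 2 + 2) = Nat.fib (r + 1) := by
      match r with
      | 0 => rfl
      | 1 => rfl
      | (n+2) => rfl
    have h3 : Nat.fib (r + 1 + 2) = Nat.fib (r + 1) + Nat.fib (r + 2) :=
      Nat.fib_add_two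
    omega

lemma sum_get_eq (cs : List RankTree) :
    ∑ j : Fin cs.length, (cs.get j).size = (cs.map RankTree.size).sum := by
  rw [← Fin.sum_univ_getElem]
  apply Finset.sum_nbij' (fun i => (Fin.cast (by simp) i : Fin (cs.map RankTree.size).length))
    (fun i => (Fin.cast (by simp) i : Fin cs.length)) <;> simp

lemma size_eq (T : RankTree) :
    T.size = 1 + ∑ j : Fin T.children.length, (T.children.get j).size := by
  obtain ⟨r, cs⟩ := T
  rw [RankTree.children_node, RankTree.size, sum_get_eq]
  congr 1
  congr 1
  simp [List.map_attach_eq_pmap, List.pmap_eq_map]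

lemma size_ge_fib_aux (T : RankTree) (hT : T.RankInvariant) :
    T.size ≥ Nat.fib (T.rank + 2) := by
  obtain ⟨f, hinj, hrank⟩ := hT T (RankTree.IsNode.refl T)
  have hsize := size_eq T
  -- sum over the injected children is at most the full sum
  have hsub : (∑ i : Fin T.rank, (T.children.get (f i)).size)
      ≤ ∑ j : Fin T.children.length, (T.children.get j).size := by
    classical
    calc (∑ i : Fin T.rank, (T.children.get (f i)).size)
        = ∑ j ∈ Finset.univ.image f, (T.children.get j).size := by
          rw [Finset.sum_image (fun x _ y _ h => hinj h)]
      _ ≤ ∑ j : Fin T.children.length, (T.children.get j).size :=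
          Finset.sum_le_sum_of_subset (Finset.subset_univ _)
  -- each injected child has size at least the corresponding Fibonacci number
  have hchild : ∀ i : Fin T.rank,
      (T.children.get (f i)).size ≥ Nat.fib (T.rank - i.val - 2 + 2) := by
    intro i
    have hmem : T.children.get (f i) ∈ T.children := T.children.get_mem _
    have hinv : (T.children.get (f i)).RankInvariant := fun v hv =>
      hT v (RankTree.IsNode.child hmem hv)
    have hrec := size_ge_fib_aux (T.children.get (f i)) hinv
    have hr : (T.children.get (f i)).rank ≥ T.rank - i.val - 2 := by
      have := hrank i; omega
    calc (T.children.get (f i)).size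
        ≥ Nat.fib ((T.children.get (f i)).rank + 2) := hrec
      _ ≥ Nat.fib (T.rank - i.val - 2 + 2) := Nat.fib_mono (by omega)
  have hsum : (∑ i : Fin T.rank, Nat.fib (T.rank - i.val - 2 + 2))
      ≤ ∑ i : Fin T.rank, (T.children.get (f i)).size :=
    Finset.sum_le_sum fun i _ => hchild i
  have := fib_sum_aux T.rank
  omega
termination_by sizeOf T
decreasing_by
  cases T with
  | node r cs =>
    simp only [RankTree.children_node] at hmem ⊢
    have := List.sizeOf_lt_of_mem hmem
    simp only [RankTree.node.sizeOf_spec]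
    omega

/-- In a finite rooted tree satisfying the rank invariant, the number of nodes
is at least `F_{rank(root) + 2}`, where `F` denotes the Fibonacci numbers. -/
theorem size_ge_fib_of_rankInvariant (T : RankTree) (hT : T.RankInvariant) :
    T.size ≥ Nat.fib (T.rank + 2) := by
  exact size_ge_fib_aux T hT
end

section
/- Let T be a finite rooted tree equipped with a rank labeling r assigning a natural number to each node, and suppose that for every node v of T there exist r(v) pairwise distinct children c_1, …, c_{r(v)} of v such that for each i with 1 ≤ i ≤ r(v) and r(v) − i − 1 ≥ 0, r(c_i) ≥ r(v) − i − 1. Then the number of nodes of T is at least φ^{r(root)}, where φ = (1 + √5)/2 is the golden ratio and root is the root of T. -/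
namespace RankTree

lemma size_node (r : ℕ) (cs : List RankTree) :
    (node r cs).size = 1 + (cs.map size).sum := by
  rw [size]
  congr 1
  simp [List.attach_map_val]

lemma size_pos (T : RankTree) : 1 ≤ T.size := by
  cases T with
  | node r cs => rw [size_node]; omega

lemma size_lt {c : RankTree} {r : ℕ} {cs : List RankTree} (hc : c ∈ cs) :
    c.size < (node r cs).size := by
  rw [size_node]
  have : c.size ∈ cs.map size := List.mem_map_of_mem hc
  have := List.le_sum_of_mem this
  omega

lemma inv_child {c T : RankTree} (hT : T.RankInvariant) (hc : c ∈ T.children) :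
    c.RankInvariant := fun v hv => hT v (IsNode.child hc hv)

lemma sum_map_size (cs : List RankTree) :
    (cs.map size).sum = ∑ j : Fin cs.length, (cs.get j).size := by
  conv_lhs => rw [← List.ofFn_get cs, List.map_ofFn, List.sum_ofFn]
  rfl

end RankTree


noncomputable def phi : ℝ := (1 + Real.sqrt 5) / 2

lemma sqrt5_sq : Real.sqrt 5 ^ 2 = 5 := Real.sq_sqrt (by norm_num)

lemma sqrt5_nonneg : 0 ≤ Real.sqrt 5 := Real.sqrt_nonneg 5

lemma sqrt5_lt_3 : Real.sqrt 5 < 3 := by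
  nlinarith [sqrt5_sq, sqrt5_nonneg]

lemma sqrt5_gt_2 : 2 < Real.sqrt 5 := by
  nlinarith [sqrt5_sq, sqrt5_nonneg]

lemma one_le_phi : (1:ℝ) ≤ phi := by unfold phi; nlinarith [sqrt5_gt_2]

lemma phi_lt_two : phi < 2 := by unfold phi; nlinarith [sqrt5_lt_3]

lemma phi_ne_one : phi ≠ 1 := by
  have := sqrt5_gt_2; unfold phi; intro h; nlinarith

lemma phi_mul : (phi - 1) * phi = 1 := by
  unfold phi; nlinarith [sqrt5_sq]

lemma geom_phi (n : ℕ) : ∑ k ∈ Finset.range n, phi ^ k = (phi ^ n - 1) * phi := by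
  rw [geom_sum_eq phi_ne_one]
  rw [div_eq_iff (by intro h; nlinarith [phi_mul] : phi - 1 ≠ 0)]
  linear_combination (1 - phi ^ n) * phi_mul

lemma key (r : ℕ) : phi ^ r ≤ 1 + ∑ i ∈ Finset.range r, phi ^ (r - i - 2) := by
  match r with
  | 0 => simp
  | 1 => simp; linarith [phi_lt_two]
  | (m+2) =>
    have h1 : ∑ i ∈ Finset.range (m+2), phi ^ (m + 2 - i - 2)
        = (∑ i ∈ Finset.range (m+1), phi ^ (m - i)) + 1 := by
      rw [Finset.sum_range_succ]
      congr 1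
      · apply Finset.sum_congr rfl; intro i hi; congr 1; omega
      · have h0 : m + 2 - (m + 1) - 2 = 0 := by omega
        rw [h0, pow_zero]
    have h2 : ∑ i ∈ Finset.range (m+1), phi ^ (m - i)
        = ∑ i ∈ Finset.range (m+1), phi ^ i := by
      have := Finset.sum_range_reflect (fun i => phi ^ i) (m+1)
      rw [← this]
      apply Finset.sum_congr rfl; intro i hi
      simp only [Finset.mem_range] at hi
      congr 1
    rw [h1, h2, geom_phi]
    have : phi ^ (m + 2) = phi ^ (m+1) * phi := by ring
    nlinarith [phi_lt_two, one_le_phi]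

lemma main_aux : ∀ (n : ℕ) (T : RankTree), T.size ≤ n → T.RankInvariant →
    phi ^ T.rank ≤ (T.size : ℝ) := by
  intro n
  induction n with
  | zero => intro T h _; exact absurd h (by have := T.size_pos; omega)
  | succ n ih =>
    rintro ⟨r, cs⟩ hn hT
    obtain ⟨f0, hfinj0, hfr⟩ := hT _ (RankTree.IsNode.refl _)
    have f : Fin r → Fin cs.length := f0
    clear f
    let f : Fin r → Fin cs.length := f0
    have hfinj : Function.Injective f := hfinj0
    have hfr' : ∀ i : Fin r, r - (i.val + 1) - 1 ≤ (cs.get (f i)).rank :=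
      fun i => hfr i
    show phi ^ r ≤ _
    have hcard : ∀ i : Fin r, phi ^ (r - i.val - 2) ≤ ((cs.get (f i)).size : ℝ) := by
      intro i
      have hmem : cs.get (f i) ∈ cs := List.get_mem cs (f i)
      have hsz : (cs.get (f i)).size ≤ n := by
        have h2 := RankTree.size_lt (r := r) hmem
        omega
      calc phi ^ (r - i.val - 2) ≤ phi ^ (cs.get (f i)).rank := by
            apply pow_le_pow_right₀ one_le_phi
            have := hfr' i
            omega
        _ ≤ _ := ih _ hsz (RankTree.inv_child hT hmem)
    have hsub : ∑ i : Fin r, ((cs.get (f i)).size : ℝ)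
        ≤ ∑ j : Fin cs.length, ((cs.get j).size : ℝ) := by
      rw [← Finset.sum_image (g := f) (f := fun j => ((cs.get j).size : ℝ))
        (fun x _ y _ h => hfinj h)]
      exact Finset.sum_le_sum_of_subset_of_nonneg (Finset.subset_univ _)
        (fun j _ _ => by positivity)
    have hrw : ((RankTree.node r cs).size : ℝ)
        = 1 + ∑ j : Fin cs.length, ((cs.get j).size : ℝ) := by
      rw [RankTree.size_node, RankTree.sum_map_size]
      push_cast
      ring
    rw [hrw]
    calc phi ^ r ≤ 1 + ∑ i ∈ Finset.range r, phi ^ (r - i - 2) := key r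
      _ = 1 + ∑ i : Fin r, phi ^ (r - i.val - 2) := by
            rw [Finset.sum_range fun i => phi ^ (r - i - 2)]
      _ ≤ 1 + ∑ i : Fin r, ((cs.get (f i)).size : ℝ) := by
            gcongr with i; exact hcard i
      _ ≤ _ := by linarith [hsub]




/-- In a finite rooted tree satisfying the rank invariant, the number of nodes
is at least `φ^{rank(root)}`, where `φ = (1 + √5)/2` is the golden ratio. -/
theorem size_ge_goldenRatio_pow_of_rankInvariant (T : RankTree)
    (hT : T.RankInvariant) :
    (T.size : ℝ) ≥ ((1 + Real.sqrt 5) / 2) ^ T.rank := by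
  have := main_aux T.size T le_rfl hT
  unfold phi at this
  exact this
end
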